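/- Let K be a compact Hausdorff space, (V_n)_{n∈ℕ} pairwise disjoint open subsets, (x_n)_{n∈ℕ} distinct points with x_n ∉ V_n for all n, ε > 0, and (μ_n)_{n∈ℕ} Radon (regular Borel) measures on K with |μ_n|(V_n) > ε for all n. Then there exist an infinite M ⊆ ℕ, open sets V'_n ⊆ V_n for n ∈ M, and δ > 0 such that |μ_n|(V'_n) > δ for all n ∈ M and closure(⋃_{n∈M} V'_n) ∩ {x_n : n ∈ M} = ∅. -/

import Mathlib

open MeasureTheory Set Metric Filter Topology TopologicalSpace

instance totalVariation_isFiniteMeasure {α : Type*} [MeasurableSpace α] (s : SignedMeasure α) :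
    IsFiniteMeasure s.totalVariation := by
  rw [SignedMeasure.totalVariation]; infer_instance

private lemma mass_sub {α : Type*} [MeasurableSpace α] (m : Measure α) (A B : Set α) (a c : ℝ)
    (hc : 0 ≤ c) (hca : c ≤ a)
    (h1 : ENNReal.ofReal a < m A) (h2 : m (A ∩ B) ≤ ENNReal.ofReal c) :
    ENNReal.ofReal (a - c) < m (A \ B) := by
  have hsplit : m A ≤ m (A \ B) + m (A ∩ B) := by
    refine le_trans (measure_mono ?_) (measure_union_le _ _)
    intro z hz
    by_cases hzB : z ∈ B
    exacts [Or.inr ⟨hz, hzB⟩, Or.inl ⟨hz, hzB⟩]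
  have key : ENNReal.ofReal (a - c) + ENNReal.ofReal c < m (A \ B) + ENNReal.ofReal c := by
    rw [← ENNReal.ofReal_add (by linarith) hc, sub_add_cancel]
    exact lt_of_lt_of_le h1 (le_trans hsplit (by gcongr))
  exact (ENNReal.add_lt_add_iff_right ENNReal.ofReal_ne_top).mp key

private lemma small_ball {α Y : Type*} [MeasurableSpace α] [TopologicalSpace α]
    [OpensMeasurableSpace α] [MetricSpace Y] (m : Measure α) [IsFiniteMeasure m]
    (Φ : α → Y) (hΦ : Continuous Φ)
    (A : Set α) (hA : MeasurableSet A) (c : Y) (hAc : A ∩ Φ ⁻¹' {c} = ∅)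
    (b η : ℝ) (hb : 0 < b) (hη : 0 < η) :
    ∃ r : ℝ, 0 < r ∧ r < b ∧ m (A ∩ Φ ⁻¹' (closedBall c r)) ≤ ENNReal.ofReal η := by
  set u : ℕ → ℝ := fun j => b / (j + 2) with hu
  have hupos : ∀ j, 0 < u j := fun j => div_pos hb (by positivity)
  have hanti : Antitone fun j => A ∩ Φ ⁻¹' (closedBall c (u j)) := by
    intro i j hij
    refine inter_subset_inter_right _ (preimage_mono (closedBall_subset_closedBall ?_))
    have : (i : ℝ) + 2 ≤ (j : ℝ) + 2 := by exact_mod_cast by omega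
    exact div_le_div_of_nonneg_left hb.le (by positivity) this
  have hulim : Tendsto u atTop (𝓝 0) := by
    apply Tendsto.div_atTop (tendsto_const_nhds)
    exact tendsto_atTop_add_const_right _ 2 tendsto_natCast_atTop_atTop
  have hiInter : (⋂ j, A ∩ Φ ⁻¹' (closedBall c (u j))) = ∅ := by
    rw [eq_empty_iff_forall_notMem]
    intro z hz
    simp only [mem_iInter, mem_inter_iff, mem_preimage, mem_closedBall] at hz
    have hd : dist (Φ z) c ≤ 0 :=
      ge_of_tendsto hulim (Eventually.of_forall fun j => (hz j).2)
    have hzc : Φ z = c := by rwa [← dist_le_zero]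
    have : z ∈ A ∩ Φ ⁻¹' {c} := ⟨(hz 0).1, by simpa [hzc]⟩
    simp [hAc] at this
  have hmeas : ∀ j, NullMeasurableSet (A ∩ Φ ⁻¹' (closedBall c (u j))) m := fun j =>
    (hA.inter ((IsClosed.preimage hΦ Metric.isClosed_closedBall).measurableSet)).nullMeasurableSet
  have hlim := MeasureTheory.tendsto_measure_iInter_atTop hmeas hanti ⟨0, measure_ne_top m _⟩
  rw [hiInter, measure_empty] at hlim
  have hev := hlim.eventually_lt_const (ENNReal.ofReal_pos.mpr hη)
  obtain ⟨j, hj⟩ := hev.exists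
  refine ⟨u j, hupos j, ?_, le_of_lt hj⟩
  rw [hu]
  exact div_lt_self hb (by push_cast; linarith [Nat.cast_nonneg (α := ℝ) j])


private lemma assemble {K : Type*} [TopologicalSpace K] [MeasurableSpace K]
    (V : ℕ → Set K) (x : ℕ → K) (μ : ℕ → SignedMeasure K)
    {Y : Type*} [MetricSpace Y] (Φ : K → Y) (hΦ : Continuous Φ)
    (δ : ℝ) (hδ : 0 < δ) (nseq : ℕ → ℕ) (hinj : Function.Injective nseq)
    (O : ℕ → Set K) (hOopen : ∀ i, IsOpen (O i)) (hOV : ∀ i, O i ⊆ V (nseq i))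
    (hmass : ∀ i, ENNReal.ofReal δ < (μ (nseq i)).totalVariation (O i))
    (s : ℕ → ℝ) (hs : ∀ i, 0 < s i)
    (hsep : ∀ i j, Φ ⁻¹' (Metric.ball (Φ (x (nseq i))) (s i)) ∩ O j = ∅) :
    ∃ (M : Set ℕ) (V' : ℕ → Set K) (δ' : ℝ), M.Infinite ∧ 0 < δ' ∧
      (∀ n ∈ M, IsOpen (V' n) ∧ V' n ⊆ V n ∧
        ENNReal.ofReal δ' < (μ n).totalVariation (V' n)) ∧
      closure (⋃ n ∈ M, V' n) ∩ {y | ∃ n ∈ M, y = x n} = ∅ := by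
  refine ⟨Set.range nseq, fun n => ⋃ (i : ℕ) (_ : nseq i = n), O i, δ,
    Set.infinite_range_of_injective hinj, hδ, ?_, ?_⟩
  · rintro n ⟨i, rfl⟩
    have hVeq : (⋃ (i' : ℕ) (_ : nseq i' = nseq i), O i') = O i := by
      apply subset_antisymm
      · refine iUnion₂_subset fun i' hi' => ?_
        rw [hinj hi']
      · intro z hz
        exact mem_iUnion₂.mpr ⟨i, rfl, hz⟩
    simp only []
    rw [hVeq]
    exact ⟨hOopen i, hOV i, hmass i⟩
  · rw [eq_empty_iff_forall_notMem]
    rintro y ⟨hycl, n, ⟨i, rfl⟩, rfl⟩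
    have hopen : IsOpen (Φ ⁻¹' Metric.ball (Φ (x (nseq i))) (s i)) :=
      Metric.isOpen_ball.preimage hΦ
    have hmem : x (nseq i) ∈ Φ ⁻¹' Metric.ball (Φ (x (nseq i))) (s i) := by
      simp [Metric.mem_ball_self (hs i)]
    obtain ⟨z, hz1, hz2⟩ := mem_closure_iff.mp hycl _ hopen hmem
    simp only [mem_iUnion] at hz2
    obtain ⟨n, ⟨j, rfl⟩, i', hi', hzO⟩ := hz2
    have : z ∈ Φ ⁻¹' (Metric.ball (Φ (x (nseq i))) (s i)) ∩ O i' := ⟨hz1, hzO⟩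
    rw [hsep i i'] at this
    exact this

theorem stmt_14 (K : Type*) [TopologicalSpace K] [CompactSpace K] [T2Space K]
    [MeasurableSpace K] [BorelSpace K]
    (V : ℕ → Set K) (hVopen : ∀ n, IsOpen (V n))
    (hVdisj : ∀ n m, n ≠ m → Disjoint (V n) (V m))
    (x : ℕ → K) (hxinj : Function.Injective x) (hx : ∀ n, x n ∉ V n)
    (μ : ℕ → SignedMeasure K) (hreg : ∀ n, (μ n).totalVariation.Regular)
    (ε : ℝ) (hε : 0 < ε)
    (hbig : ∀ n, ENNReal.ofReal ε < (μ n).totalVariation (V n)) :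
    ∃ (M : Set ℕ) (V' : ℕ → Set K) (δ : ℝ), M.Infinite ∧ 0 < δ ∧
      (∀ n ∈ M, IsOpen (V' n) ∧ V' n ⊆ V n ∧
        ENNReal.ofReal δ < (μ n).totalVariation (V' n)) ∧
      closure (⋃ n ∈ M, V' n) ∩ {y | ∃ n ∈ M, y = x n} = ∅ := by
  classical
  set tv : ℕ → Measure K := fun n => (μ n).totalVariation with htv
  -- Stage 1: compact sets with large mass, and Urysohn functions
  have hF : ∀ n, ∃ F : Set K, F ⊆ V n ∧ IsCompact F ∧ ENNReal.ofReal ε < tv n F := by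
    intro n
    obtain ⟨F, hFV, hFc, hFm⟩ :=
      (hreg n).innerRegular (hVopen n) (ENNReal.ofReal ε) (hbig n)
    exact ⟨F, hFV, hFc, hFm⟩
  choose F hFV hFc hFm using hF
  have hf : ∀ n, ∃ f : C(K, ℝ), EqOn f 0 (V n)ᶜ ∧ EqOn f 1 (F n) ∧ ∀ z, f z ∈ Icc (0:ℝ) 1 := by
    intro n
    exact exists_continuous_zero_one_of_isClosed (hVopen n).isClosed_compl
      (hFc n).isClosed (by
        rw [Set.disjoint_left]; intro z hz1 hz2; exact hz1 (hFV n hz2))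
  choose f hf0 hf1 hf01 using hf
  set W : ℕ → Set K := fun n => {z | 1/2 < f n z} with hW
  have hWopen : ∀ n, IsOpen (W n) := fun n =>
    isOpen_lt continuous_const (f n).continuous
  have hWV : ∀ n, W n ⊆ V n := by
    intro n z hz
    by_contra hzV
    have := hf0 n hzV
    simp only [Pi.zero_apply] at this
    rw [hW] at hz; simp only [mem_setOf_eq, this] at hz; linarith
  have hWmass : ∀ n, ENNReal.ofReal ε < tv n (W n) := by
    intro n
    refine lt_of_lt_of_le (hFm n) (measure_mono ?_)
    intro z hz
    have := hf1 n hz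
    simp only [Pi.one_apply] at this
    rw [hW]; simp only [mem_setOf_eq, this]; norm_num
  have hxW : ∀ n, f n (x n) = 0 := by
    intro n
    have := hf0 n (hx n)
    simpa using this
  -- Stage 2: separating functions
  have hg : ∀ e : ℕ × ℕ, ∃ g : C(K, ℝ), e.1 ≠ e.2 → g (x e.1) = 0 ∧ g (x e.2) = 1 := by
    intro e
    by_cases h : e.1 = e.2
    · exact ⟨0, fun hne => absurd h hne⟩
    · obtain ⟨g, h0, h1, -⟩ := exists_continuous_zero_one_of_isClosed
        (isClosed_singleton (x := x e.1)) (isClosed_singleton (x := x e.2))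
        (by rw [Set.disjoint_singleton]; exact fun hh => h (hxinj hh))
      exact ⟨g, fun _ => ⟨by simpa using h0 (mem_singleton _), by simpa using h1 (mem_singleton _)⟩⟩
  choose g hgspec using hg
  -- Stage 3: the metrizable quotient
  let Y : Type _ := (ℕ ⊕ ℕ × ℕ) → ℝ
  letI : MetricSpace Y := TopologicalSpace.metrizableSpaceMetric Y
  set Φ : K → Y := fun z => Sum.elim (fun n => f n z) (fun e => g e z) with hΦdef
  have hΦ : Continuous Φ := by
    apply continuous_pi
    rintro (n | e)
    · exact (f n).continuous
    · exact (g e).continuous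
  set p : ℕ → Y := fun m => Φ (x m) with hp
  have hpinj : Function.Injective p := by
    intro m m' h
    by_contra hne
    have h1 : p m (Sum.inr (m, m')) = p m' (Sum.inr (m, m')) := by rw [h]
    have h2 := hgspec (m, m') hne
    simp only [hp, hΦdef, Sum.elim_inr] at h1
    rw [h2.1, h2.2] at h1
    norm_num at h1
  -- Stage 4: convergent subsequence of the image points
  have hcpt : IsCompact (Set.range Φ) := isCompact_range hΦ
  obtain ⟨q, -, φ, hφmono, hconv⟩ :=
    hcpt.tendsto_subseq (x := fun m => p m) (fun m => ⟨x m, rfl⟩)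
  -- coordinate limits
  have hcoord : ∀ n, Tendsto (fun kk => f n (x (φ kk))) atTop (𝓝 (q (Sum.inl n))) := by
    intro n
    have hev : Continuous fun y : Y => y (Sum.inl n) := continuous_apply _
    have := (hev.tendsto q).comp hconv
    convert this using 1
    rfl
  have hBadImp : ∀ n, 1/2 < q (Sum.inl n) → ∀ᶠ kk in atTop, x (φ kk) ∈ V n := by
    intro n hn
    filter_upwards [(hcoord n).eventually_const_lt hn] with kk hkk
    exact hWV n hkk
  have hBad2 : ∀ n m, 1/2 < q (Sum.inl n) → 1/2 < q (Sum.inl m) → n = m := by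
    intro n m hn hm
    by_contra hne
    obtain ⟨kk, h1, h2⟩ := ((hBadImp n hn).and (hBadImp m hm)).exists
    exact Set.disjoint_left.mp (hVdisj n m hne) h1 h2
  -- Stage 5: shift to avoid the bad index and the limit point
  have hK₁ : ∃ K₁, ∀ kk ≥ K₁, q (Sum.inl (φ kk)) ≤ 1/2 := by
    by_cases hB : ∃ n, 1/2 < q (Sum.inl n)
    · obtain ⟨nb, hnb⟩ := hB
      refine ⟨nb + 1, fun kk hkk => ?_⟩
      by_contra hlt
      push_neg at hlt
      have heq := hBad2 _ _ hlt hnb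
      have : kk ≤ φ kk := hφmono.le_apply
      omega
    · push_neg at hB
      exact ⟨0, fun kk _ => hB _⟩
  have hK₂ : ∃ K₂, ∀ kk ≥ K₂, p (φ kk) ≠ q := by
    by_cases hB : ∃ k₀, p (φ k₀) = q
    · obtain ⟨k₀, hk₀⟩ := hB
      refine ⟨k₀ + 1, fun kk hkk h => ?_⟩
      have : φ kk = φ k₀ := hpinj (by rw [h, hk₀])
      have := hφmono.injective this
      omega
    · push_neg at hB
      exact ⟨0, fun kk _ => hB _⟩
  obtain ⟨K₁, hK₁⟩ := hK₁
  obtain ⟨K₂, hK₂⟩ := hK₂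
  set ψ : ℕ → ℕ := fun kk => φ (kk + max K₁ K₂) with hψdef
  have hψmono : StrictMono ψ := fun a b hab => hφmono (by omega)
  have hψq : ∀ kk, q (Sum.inl (ψ kk)) ≤ 1/2 := fun kk => hK₁ _ (by omega)
  have hψne : ∀ kk, p (ψ kk) ≠ q := fun kk => hK₂ _ (by omega)
  have hconvψ : Tendsto (fun kk => p (ψ kk)) atTop (𝓝 q) := by
    have hshift : Tendsto (fun kk : ℕ => kk + max K₁ K₂) atTop atTop :=
      tendsto_add_atTop_nat _
    exact hconv.comp hshift
  set t : ℕ → ℝ := fun kk => dist (p (ψ kk)) q with ht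
  have ht0 : ∀ kk, 0 < t kk := fun kk => dist_pos.mpr (hψne kk)
  have htt : Tendsto t atTop (𝓝 0) := by
    rw [ht]
    exact tendsto_iff_dist_tendsto_zero.mp hconvψ
  -- key emptiness facts
  have hWq : ∀ kk, W (ψ kk) ∩ Φ ⁻¹' {q} = ∅ := by
    intro kk
    rw [eq_empty_iff_forall_notMem]
    rintro z ⟨hz1, hz2⟩
    have : Φ z (Sum.inl (ψ kk)) = q (Sum.inl (ψ kk)) := by rw [mem_preimage, mem_singleton_iff] at hz2; rw [hz2]
    simp only [hΦdef, Sum.elim_inl] at this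
    rw [hW] at hz1
    simp only [mem_setOf_eq] at hz1
    have := hψq kk
    linarith [hz1, this]
  have hWp : ∀ n, W n ∩ Φ ⁻¹' {p n} = ∅ := by
    intro n
    rw [eq_empty_iff_forall_notMem]
    rintro z ⟨hz1, hz2⟩
    have : Φ z (Sum.inl n) = p n (Sum.inl n) := by rw [mem_preimage, mem_singleton_iff] at hz2; rw [hz2]
    simp only [hΦdef, hp, Sum.elim_inl] at this
    rw [hxW n] at this
    rw [hW] at hz1
    simp only [mem_setOf_eq] at hz1
    linarith
  -- Case dichotomy
  by_cases hcase : ∃ r > 0,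
      {kk : ℕ | tv (ψ kk) (W (ψ kk) ∩ Φ ⁻¹' (ball q r)) ≤ ENNReal.ofReal (ε/2)}.Infinite
  · -- Case I: mass does not concentrate at q
    obtain ⟨r, hr, hS⟩ := hcase
    have hsmall : ∀ᶠ kk in atTop, t kk < r/4 := htt.eventually_lt_const (by linarith)
    obtain ⟨N, hN⟩ := eventually_atTop.mp hsmall
    set Sgood : Set ℕ := {kk : ℕ | tv (ψ kk) (W (ψ kk) ∩ Φ ⁻¹' (ball q r)) ≤ ENNReal.ofReal (ε/2)}
      \ Set.Iio N with hSgood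
    have hS' : Sgood.Infinite := hS.diff (Set.finite_Iio N)
    let e : ℕ ↪ ↥Sgood := hS'.natEmbedding
    have heS : ∀ i : ℕ, ((e i : ℕ) ∈ Sgood) := fun i => (e i).2
    refine assemble V x μ Φ hΦ (ε/4) (by linarith) (fun i => ψ (e i))
      (hψmono.injective.comp (Subtype.val_injective.comp e.injective))
      (fun i => W (ψ (e i)) \ Φ ⁻¹' (closedBall q (r/2)))
      (fun i => (hWopen _).sdiff (Metric.isClosed_closedBall.preimage hΦ))
      (fun i => fun z hz => hWV _ hz.1)
      ?_ (fun _ => r/4) (fun _ => by linarith) ?_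
    · intro i
      have hmem := heS i
      simp only [hSgood, mem_diff, mem_setOf_eq, mem_Iio, not_lt] at hmem
      obtain ⟨h1, -⟩ := hmem
      have h2 : tv (ψ (e i)) (W (ψ (e i)) ∩ Φ ⁻¹' (closedBall q (r/2))) ≤ ENNReal.ofReal (ε/2) := by
        refine le_trans (measure_mono ?_) h1
        exact inter_subset_inter_right _ (preimage_mono (closedBall_subset_ball (by linarith)))
      have := mass_sub (tv (ψ (e i))) _ _ ε (ε/2) (by linarith) (by linarith) (hWmass _) h2
      exact lt_of_le_of_lt (ENNReal.ofReal_le_ofReal (by linarith)) this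
    · intro i j
      rw [eq_empty_iff_forall_notMem]
      rintro z ⟨hz1, hz2, hz3⟩
      apply hz3
      rw [mem_preimage, mem_closedBall]
      have hti : t (e i) < r/4 := by
        have hmem := heS i
        simp only [hSgood, mem_diff, mem_setOf_eq, mem_Iio, not_lt] at hmem
        exact hN _ hmem.2
      have hdist : dist (Φ z) (Φ (x (ψ (e i)))) < r/4 := by
        rw [mem_preimage, mem_ball] at hz1; exact hz1
      have : dist (Φ (x (ψ (e i)))) q = t (e i) := rfl
      calc dist (Φ z) q ≤ dist (Φ z) (Φ (x (ψ (e i)))) + dist (Φ (x (ψ (e i)))) q := dist_triangle _ _ _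
        _ ≤ r/4 + r/4 := by rw [this]; exact add_le_add hdist.le hti.le
        _ = r/2 := by ring
  · -- Case II: mass concentrates at q
    push_neg at hcase
    have hcof : ∀ r : ℝ, 0 < r → ∀ᶠ kk in atTop,
        ENNReal.ofReal (ε/2) < tv (ψ kk) (W (ψ kk) ∩ Φ ⁻¹' (ball q r)) := by
      intro r hr
      have hfin := hcase r hr
      have hev := hfin.eventually_cofinite_notMem
      rw [Nat.cofinite_eq_atTop] at hev
      filter_upwards [hev] with kk h
      exact not_le.mp h
    set P : ℕ → ℝ → ℕ × ℝ × ℝ → Prop := fun k₀ r₀ d =>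
      k₀ < d.1 ∧ t d.1 < r₀ ∧
      ENNReal.ofReal (ε/2) < tv (ψ d.1) (W (ψ d.1) ∩ Φ ⁻¹' (ball q (r₀/2))) ∧
      0 < d.2.1 ∧ d.2.1 < r₀/2 ∧ d.2.1 < t d.1 ∧
      tv (ψ d.1) (W (ψ d.1) ∩ Φ ⁻¹' (closedBall q d.2.1)) ≤ ENNReal.ofReal (ε/8) ∧
      0 < d.2.2 ∧
      tv (ψ d.1) (W (ψ d.1) ∩ Φ ⁻¹' (closedBall (p (ψ d.1)) d.2.2)) ≤ ENNReal.ofReal (ε/8)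
      with hP
    have hstep : ∀ (k₀ : ℕ) (r₀ : ℝ), 0 < r₀ → ∃ d : ℕ × ℝ × ℝ, P k₀ r₀ d := by
      intro k₀ r₀ hr₀
      have h1 := hcof (r₀/2) (by linarith)
      have h2 : ∀ᶠ kk in atTop, t kk < r₀ := htt.eventually_lt_const hr₀
      have h3 : ∀ᶠ kk in atTop, k₀ < kk := eventually_gt_atTop k₀
      obtain ⟨kk, hkk1, hkk2, hkk3⟩ := (h1.and (h2.and h3)).exists
      obtain ⟨r', hr'1, hr'2, hr'3⟩ := small_ball (tv (ψ kk)) Φ hΦ (W (ψ kk))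
        (hWopen _).measurableSet q (hWq kk) (min (r₀/2) (t kk)) (ε/8)
        (lt_min (by linarith) (ht0 kk)) (by linarith)
      obtain ⟨ρ, hρ1, -, hρ3⟩ := small_ball (tv (ψ kk)) Φ hΦ (W (ψ kk))
        (hWopen _).measurableSet (p (ψ kk)) (hWp (ψ kk)) 1 (ε/8) one_pos (by linarith)
      refine ⟨(kk, r', ρ), hkk3, hkk2, hkk1, hr'1, ?_, ?_, hr'3, hρ1, hρ3⟩
      · exact lt_of_lt_of_le hr'2 (min_le_left _ _)
      · exact lt_of_lt_of_le hr'2 (min_le_right _ _)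
    have hstep2 : ∀ d : ℕ × ℝ × ℝ, ∃ d' : ℕ × ℝ × ℝ,
        (0 < d.2.1 → P d.1 d.2.1 d') ∧ 0 < d'.2.1 := by
      intro d
      by_cases h : 0 < d.2.1
      · obtain ⟨d', hd'⟩ := hstep d.1 d.2.1 h
        exact ⟨d', fun _ => hd', hd'.2.2.2.1⟩
      · exact ⟨(0, 1, 1), fun hh => absurd hh h, one_pos⟩
    choose next hnextP hnextpos using hstep2
    set D : ℕ → ℕ × ℝ × ℝ := fun i => Nat.rec (next (0, 1, 1)) (fun _ prev => next prev) i with hD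
    have hD0 : D 0 = next (0, 1, 1) := rfl
    have hDS : ∀ i, D (i + 1) = next (D i) := fun i => rfl
    have hDpos : ∀ i, 0 < (D i).2.1 := by
      intro i
      cases i with
      | zero => rw [hD0]; exact hnextpos _
      | succ j => rw [hDS]; exact hnextpos _
    set kseq : ℕ → ℕ := fun i => (D i).1 with hkseq
    set r' : ℕ → ℝ := fun i => (D i).2.1 with hr'
    set ρ : ℕ → ℝ := fun i => (D i).2.2 with hρ
    set pr : ℕ → ℝ := fun i => Nat.rec (1 : ℝ) (fun j _ => r' j) i with hpr
    have hpr0 : pr 0 = 1 := rfl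
    have hprS : ∀ i, pr (i + 1) = r' i := fun i => rfl
    have hPP : ∀ i, P (Nat.rec 0 (fun j _ => kseq j) i) (pr i) (D i) := by
      intro i
      cases i with
      | zero =>
        rw [hD0]
        exact hnextP (0, 1, 1) one_pos
      | succ j =>
        rw [hDS, hprS]
        exact hnextP (D j) (hDpos j)
    -- components
    have C1 : ∀ i, t (kseq i) < pr i := fun i => (hPP i).2.1
    have C2 : ∀ i, ENNReal.ofReal (ε/2) <
        tv (ψ (kseq i)) (W (ψ (kseq i)) ∩ Φ ⁻¹' (ball q (pr i / 2))) := fun i => (hPP i).2.2.1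
    have C3 : ∀ i, 0 < r' i := fun i => (hPP i).2.2.2.1
    have C4 : ∀ i, r' i < pr i / 2 := fun i => (hPP i).2.2.2.2.1
    have C5 : ∀ i, r' i < t (kseq i) := fun i => (hPP i).2.2.2.2.2.1
    have C6 : ∀ i, tv (ψ (kseq i)) (W (ψ (kseq i)) ∩ Φ ⁻¹' (closedBall q (r' i)))
        ≤ ENNReal.ofReal (ε/8) := fun i => (hPP i).2.2.2.2.2.2.1
    have C7 : ∀ i, 0 < ρ i := fun i => (hPP i).2.2.2.2.2.2.2.1
    have C8 : ∀ i, tv (ψ (kseq i)) (W (ψ (kseq i)) ∩ Φ ⁻¹' (closedBall (p (ψ (kseq i))) (ρ i)))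
        ≤ ENNReal.ofReal (ε/8) := fun i => (hPP i).2.2.2.2.2.2.2.2
    have C9 : ∀ i, kseq i < kseq (i + 1) := fun i => (hPP (i + 1)).1
    have hprpos : ∀ i, 0 < pr i := by
      intro i
      cases i with
      | zero => rw [hpr0]; exact one_pos
      | succ j => rw [hprS]; exact C3 j
    have hkmono : StrictMono kseq := strictMono_nat_of_lt_succ C9
    have hr'anti : Antitone r' := by
      apply antitone_nat_of_succ_le
      intro j
      have h1 : r' (j + 1) < pr (j + 1) / 2 := C4 (j + 1)
      rw [hprS] at h1
      linarith [C3 j]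
    have hranti : Antitone (fun i => pr i / 2) := by
      apply antitone_nat_of_succ_le
      intro j
      have := C4 j
      rw [hprS]
      linarith [hprpos j]
    have hprr' : ∀ i j, i < j → pr j ≤ r' i := by
      intro i j hij
      obtain ⟨jj, rfl⟩ : ∃ jj, j = jj + 1 := ⟨j - 1, by omega⟩
      rw [hprS]
      exact hr'anti (by omega)
    -- finish
    refine assemble V x μ Φ hΦ (ε/4) (by linarith) (fun i => ψ (kseq i))
      (hψmono.injective.comp hkmono.injective)
      (fun i => (W (ψ (kseq i)) ∩ Φ ⁻¹' (ball q (pr i / 2))) \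
        (Φ ⁻¹' (closedBall q (r' i)) ∪ Φ ⁻¹' (closedBall (p (ψ (kseq i))) (ρ i))))
      (fun i => ((hWopen _).inter (Metric.isOpen_ball.preimage hΦ)).sdiff
        ((Metric.isClosed_closedBall.preimage hΦ).union (Metric.isClosed_closedBall.preimage hΦ)))
      (fun i z hz => hWV _ hz.1.1)
      ?_
      (fun j => min (t (kseq j) - pr (j + 1) / 2) (min (ρ j) (pr j - t (kseq j))))
      ?_ ?_
    · -- mass
      intro i
      have hB : tv (ψ (kseq i)) ((W (ψ (kseq i)) ∩ Φ ⁻¹' (ball q (pr i / 2))) ∩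
          (Φ ⁻¹' (closedBall q (r' i)) ∪ Φ ⁻¹' (closedBall (p (ψ (kseq i))) (ρ i))))
          ≤ ENNReal.ofReal (ε/4) := by
        have hsub : (W (ψ (kseq i)) ∩ Φ ⁻¹' (ball q (pr i / 2))) ∩
            (Φ ⁻¹' (closedBall q (r' i)) ∪ Φ ⁻¹' (closedBall (p (ψ (kseq i))) (ρ i))) ⊆
            (W (ψ (kseq i)) ∩ Φ ⁻¹' (closedBall q (r' i))) ∪
            (W (ψ (kseq i)) ∩ Φ ⁻¹' (closedBall (p (ψ (kseq i))) (ρ i))) := by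
          rintro z ⟨⟨hzW, -⟩, hz2 | hz2⟩
          exacts [Or.inl ⟨hzW, hz2⟩, Or.inr ⟨hzW, hz2⟩]
        refine le_trans (measure_mono hsub) (le_trans (measure_union_le _ _) ?_)
        have : ENNReal.ofReal (ε/8) + ENNReal.ofReal (ε/8) = ENNReal.ofReal (ε/4) := by
          rw [← ENNReal.ofReal_add (by linarith) (by linarith)]
          congr 1
          ring
        rw [← this]
        exact add_le_add (C6 i) (C8 i)
      have := mass_sub (tv (ψ (kseq i))) _ _ (ε/2) (ε/4) (by linarith) (by linarith) (C2 i) hB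
      exact lt_of_le_of_lt (ENNReal.ofReal_le_ofReal (by linarith)) this
    · -- positivity of s
      intro j
      refine lt_min ?_ (lt_min (C7 j) ?_)
      · have h1 : pr (j + 1) / 2 < r' j := by rw [hprS]; linarith [C3 j]
        linarith [C5 j]
      · linarith [C1 j]
    · -- separation
      intro a b
      rw [eq_empty_iff_forall_notMem]
      rintro z ⟨hz1, ⟨hzW, hzball⟩, hzout⟩
      rw [mem_preimage, mem_ball] at hz1 hzball
      have hpa : Φ (x (ψ (kseq a))) = p (ψ (kseq a)) := rfl
      rw [hpa] at hz1
      rcases lt_trichotomy a b with hab | hab | hab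
      · -- a < b : small later ball
        have hsa : dist (Φ z) (p (ψ (kseq a))) < t (kseq a) - pr (a + 1) / 2 :=
          lt_of_lt_of_le hz1 (min_le_left _ _)
        have hrb : pr b / 2 ≤ pr (a + 1) / 2 := hranti (show a + 1 ≤ b by omega)
        have htri : t (kseq a) ≤ dist (p (ψ (kseq a))) (Φ z) + dist (Φ z) q := dist_triangle _ _ _
        rw [dist_comm (p (ψ (kseq a))) (Φ z)] at htri
        linarith [hzball, hsa, hrb, htri]
      · -- a = b
        subst hab
        apply hzout
        right
        rw [mem_preimage, mem_closedBall]
        have : dist (Φ z) (p (ψ (kseq a))) ≤ ρ a :=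
          le_of_lt (lt_of_lt_of_le hz1 (le_trans (min_le_right _ _) (min_le_left _ _)))
        exact this
      · -- b < a
        apply hzout
        left
        rw [mem_preimage, mem_closedBall]
        have hsa : dist (Φ z) (p (ψ (kseq a))) < pr a - t (kseq a) :=
          lt_of_lt_of_le hz1 (le_trans (min_le_right _ _) (min_le_right _ _))
        have htr : dist (Φ z) q ≤ dist (Φ z) (p (ψ (kseq a))) + dist (p (ψ (kseq a))) q :=
          dist_triangle _ _ _
        have ht' : dist (p (ψ (kseq a))) q = t (kseq a) := rfl
        have hple : pr a ≤ r' b := hprr' b a hab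
        rw [ht'] at htr
        linarith
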